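/- For any closed subset A of X, the closure of A in the space X +_f Y equals A ∪ f(A). -/

import Mathlib

open Set Topology

variable {X Y : Type*} [TopologicalSpace X] [TopologicalSpace Y]

/-- A map on subsets is *admissible* if it sends closed sets to closed sets,
the empty set to the empty set, and is finitely additive on closed sets. -/
def Admissible (f : Set X → Set Y) : Prop :=
  (∀ A : Set X, IsClosed A → IsClosed (f A)) ∧ f ∅ = ∅ ∧
    ∀ A B : Set X, IsClosed A → IsClosed B → f (A ∪ B) = f A ∪ f B

/-- The defining condition for a subset of `X ⊕ Y` to be closed in the sum space `X +_f Y`. -/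
def SumClosed (f : Set X → Set Y) (A : Set (X ⊕ Y)) : Prop :=
  IsClosed (Sum.inl ⁻¹' A) ∧ IsClosed (Sum.inr ⁻¹' A) ∧
    f (Sum.inl ⁻¹' A) ⊆ Sum.inr ⁻¹' A

theorem Admissible.mono {f : Set X → Set Y} (hf : Admissible f) {A B : Set X}
    (hA : IsClosed A) (hB : IsClosed B) (hAB : A ⊆ B) : f A ⊆ f B := by
  have h := hf.2.2 A B hA hB
  rw [union_eq_right.mpr hAB] at h
  rw [h]; exact subset_union_left

/-- The sum space `X +_f Y`. -/
def sumTopology (f : Set X → Set Y) (hf : Admissible f) : TopologicalSpace (X ⊕ Y) where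
  IsOpen s := SumClosed f sᶜ
  isOpen_univ := by
    refine ⟨?_, ?_, ?_⟩ <;> simp [hf.2.1]
  isOpen_inter := by
    rintro s t ⟨hs1, hs2, hs3⟩ ⟨ht1, ht2, ht3⟩
    refine ⟨?_, ?_, ?_⟩
    · simpa [compl_inter, preimage_union] using hs1.union ht1
    · simpa [compl_inter, preimage_union] using hs2.union ht2
    · rw [compl_inter, preimage_union, preimage_union, hf.2.2 _ _ hs1 ht1]
      exact union_subset_union hs3 ht3
  isOpen_sUnion := by
    intro S hS
    have hc : (⋃₀ S)ᶜ = ⋂ s ∈ S, sᶜ := by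
      rw [compl_sUnion, sInter_image]
    have h1 : IsClosed (Sum.inl ⁻¹' (⋃₀ S)ᶜ) := by
      rw [hc, preimage_iInter₂]
      exact isClosed_biInter fun s hs => (hS s hs).1
    have h2 : IsClosed (Sum.inr ⁻¹' (⋃₀ S)ᶜ) := by
      rw [hc, preimage_iInter₂]
      exact isClosed_biInter fun s hs => (hS s hs).2.1
    refine ⟨h1, h2, ?_⟩
    rw [hc, preimage_iInter₂, preimage_iInter₂]
    refine subset_iInter₂ fun s hs => ?_
    have h1' : IsClosed (⋂ i ∈ S, Sum.inl ⁻¹' iᶜ) := by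
      exact isClosed_biInter fun i hi => (hS i hi).1
    calc f (⋂ i ∈ S, Sum.inl ⁻¹' iᶜ) ⊆ f (Sum.inl ⁻¹' sᶜ) :=
          hf.mono h1' (hS s hs).1 (iInter₂_subset s hs)
      _ ⊆ Sum.inr ⁻¹' sᶜ := (hS s hs).2.2

theorem isClosed_sumTopology {f : Set X → Set Y} (hf : Admissible f) (A : Set (X ⊕ Y)) :
    IsClosed[sumTopology f hf] A ↔ SumClosed f A := by
  rw [← @isOpen_compl_iff _ _ (sumTopology f hf)]
  show SumClosed f Aᶜᶜ ↔ _
  rw [compl_compl]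

/-- for closed `A ⊆ X`, the closure of `A` in `X +_f Y` is `A ∪ f A`. -/
theorem statement1 (f : Set X → Set Y) (hf : Admissible f)
    (A : Set X) (hA : IsClosed A) :
    @closure _ (sumTopology f hf) (Sum.inl '' A) = Sum.inl '' A ∪ Sum.inr '' f A := by
  apply subset_antisymm
  · refine @closure_minimal _ (sumTopology f hf) _ _ subset_union_left ?_
    rw [isClosed_sumTopology]
    refine ⟨?_, ?_, ?_⟩
    · have : Sum.inl ⁻¹' (Sum.inl '' A ∪ Sum.inr '' f A : Set (X ⊕ Y)) = A := by
        ext x; simp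
      rw [this]; exact hA
    · have : Sum.inr ⁻¹' (Sum.inl '' A ∪ Sum.inr '' f A : Set (X ⊕ Y)) = f A := by
        ext y; simp
      rw [this]; exact hf.1 A hA
    · intro y hy
      have h1 : Sum.inl ⁻¹' (Sum.inl '' A ∪ Sum.inr '' f A : Set (X ⊕ Y)) = A := by
        ext x; simp
      rw [h1] at hy
      simp [hy]
  · have hcl : SumClosed f (@closure _ (sumTopology f hf) (Sum.inl '' A)) :=
      (isClosed_sumTopology hf _).mp (@isClosed_closure _ (sumTopology f hf) _)
    rintro z (hz | hz)
    · exact @subset_closure _ (sumTopology f hf) _ _ hz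
    · obtain ⟨y, hy, rfl⟩ := hz
      have hsub : A ⊆ Sum.inl ⁻¹' (@closure _ (sumTopology f hf) (Sum.inl '' A)) := by
        intro x hx
        exact @subset_closure _ (sumTopology f hf) _ _ ⟨x, hx, rfl⟩
      exact hcl.2.2 (hf.mono hA hcl.1 hsub hy)
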